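/- For the graph G_B obtained by connecting each canonical pair {v, π_B(v)} of a GM bubble B by an edge of color 0, the total number of bicolored {0,c}-cycles is Σ_{c=1}^d L_{0c}(G_B) = d + Σ_C (d − |C|) b_C = dV/2 − Σ_C |C| b_C. -/
import Mathlib


open Equiv

/-- A bubble with `2n` vertices (`n` white, `n` black): for each color `c ∈ {1,…,d}` the
perfect matching of color `c` is a bijection from white to black vertices. -/
abbrev Bubble (d n : ℕ) := Fin d → Equiv.Perm (Fin n)

/-- Extension of a white-to-black matching to one more white and one more black vertex
(both indexed by `0`, old vertices shifted by `Fin.succ`), the two new vertices matched. -/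
def extPerm {n : ℕ} (f : Equiv.Perm (Fin n)) : Equiv.Perm (Fin (n + 1)) :=
  (finSuccEquiv n).symm.permCongr f.optionCongr

/-- `C`-bidipole insertion at the white vertex `v`: `v` is replaced by the three vertices
`v`, `v̄`, `w`, where the new black vertex `v̄` is joined to the new white vertex `w` by the
colors of `C` and to `v` by the complementary colors. -/
def insertWhite {d n : ℕ} (B : Bubble d n) (C : Finset (Fin d)) (v : Fin n) :
    Bubble d (n + 1) :=
  fun c => if c ∈ C then extPerm (B c) else extPerm (B c) * Equiv.swap 0 v.succ

/-- `C`-bidipole insertion at a black vertex (the color-reversed move). -/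
def insertBlack {d n : ℕ} (B : Bubble d n) (C : Finset (Fin d)) (b : Fin n) :
    Bubble d (n + 1) :=
  fun c => if c ∈ C then extPerm (B c) else Equiv.swap 0 b.succ * extPerm (B c)

/-- Admissible color sets: nonempty, `|C| ≤ d/2`, and containing the color `1`
(i.e. `(0 : Fin d)`) whenever `|C| = d/2`. -/
def AdmSet (d : ℕ) (C : Finset (Fin d)) : Prop :=
  C.Nonempty ∧ 2 * C.card ≤ d ∧ (2 * C.card = d → ∃ h : 0 < d, (⟨0, h⟩ : Fin d) ∈ C)

/-- `Builds d n B s` : the bubble `B` (with `2n` vertices) is obtained from the 2-vertex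
bubble by a sequence of bidipole insertions whose multiset of (admissible) color sets
is `s`.  GM bubbles are exactly the bubbles built this way. -/
inductive Builds (d : ℕ) : (n : ℕ) → Bubble d n → Multiset (Finset (Fin d)) → Prop
  | base : Builds d 1 (fun _ => 1) 0
  | stepW {n : ℕ} {B : Bubble d n} {s : Multiset (Finset (Fin d))}
      (C : Finset (Fin d)) (v : Fin n) (hC : AdmSet d C) (h : Builds d n B s) :
      Builds d (n + 1) (insertWhite B C v) (C ::ₘ s)
  | stepB {n : ℕ} {B : Bubble d n} {s : Multiset (Finset (Fin d))}
      (C : Finset (Fin d)) (b : Fin n) (hC : AdmSet d C) (h : Builds d n B s) :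
      Builds d (n + 1) (insertBlack B C b) (C ::ₘ s)

/-- Number of orbits of a self-map: classes of the equivalence generated by `x ~ f x`. -/
noncomputable def numOrbits {D : Type*} (f : D → D) : ℕ :=
  Nat.card (Quotient (Relation.EqvGen.setoid fun x y => f x = y))

/-- Total number of bicolored `{0,c}`-cycles of the graph obtained by joining each white
vertex `v` to the black vertex `π v` by an edge of color `0`: for each color `c`, the
cycles are the orbits of `v ↦ (B c)⁻¹ (π v)` on white vertices. -/
noncomputable def pairingCycles {d n : ℕ} (B : Bubble d n) (π : Equiv.Perm (Fin n)) : ℕ :=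
  ∑ c : Fin d, numOrbits fun v => (B c).symm (π v)

abbrev R {α : Type*} (f : α → α) : α → α → Prop := Relation.EqvGen (fun x y => f x = y)

lemma R.step {α : Type*} (f : α → α) (x : α) : R f x (f x) := Relation.EqvGen.rel _ _ rfl

/-- adding a fixed new point `0` -/
lemma numOrbits_ext {n : ℕ} (g : Fin n → Fin n) (F : Fin (n+1) → Fin (n+1))
    (h0 : F 0 = 0) (hs : ∀ x, F x.succ = (g x).succ) :
    numOrbits F = numOrbits g + 1 := by
  have sound1 : ∀ x y : Fin (n+1), R F x y →
      (Fin.cases (motive := fun _ => Option (Quotient (Relation.EqvGen.setoid fun x y => g x = y)))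
        none (fun a => some ⟦a⟧) x) =
      (Fin.cases none (fun a => some ⟦a⟧) y) := by
    intro x y h
    induction h with
    | rel x y hxy =>
      subst hxy
      cases x using Fin.cases with
      | zero => rw [h0]
      | succ a =>
        rw [hs a]
        simp only [Fin.cases_succ, Option.some.injEq]
        exact Quotient.sound (R.step g a)
    | refl => rfl
    | symm _ _ _ ih => exact ih.symm
    | trans _ _ _ _ _ ih1 ih2 => exact ih1.trans ih2
  have sound2 : ∀ a b : Fin n, R g a b →
      (⟦a.succ⟧ : Quotient (Relation.EqvGen.setoid fun x y => F x = y)) = ⟦b.succ⟧ := by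
    intro a b h
    induction h with
    | rel a b hab =>
      subst hab
      refine Quotient.sound ?_
      have := R.step F a.succ
      rwa [hs a] at this
    | refl => rfl
    | symm _ _ _ ih => exact ih.symm
    | trans _ _ _ _ _ ih1 ih2 => exact ih1.trans ih2
  have e : Quotient (Relation.EqvGen.setoid fun x y => F x = y) ≃
      Option (Quotient (Relation.EqvGen.setoid fun x y => g x = y)) :=
    { toFun := Quotient.lift _ sound1
      invFun := fun o => o.elim ⟦0⟧ (Quotient.lift (fun a => ⟦a.succ⟧) sound2)
      left_inv := by
        refine Quotient.ind ?_
        intro x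
        cases x using Fin.cases with
        | zero => simp
        | succ a => simp
      right_inv := by
        rintro (_ | q)
        · simp
        · obtain ⟨a⟩ := q
          show Quotient.lift _ sound1 ⟦a.succ⟧ = _
          rw [Quotient.lift_mk]
          simp
          rfl }
  rw [numOrbits, Nat.card_congr e, Finite.card_option, numOrbits]

lemma numOrbits_congr {α β : Type*} (f : α → α) (F : β → β) (φ : β → α) (θ : α → β)
    (h1 : ∀ x, R f (φ x) (φ (F x)))
    (h2 : ∀ a, R F (θ a) (θ (f a)))
    (h3 : ∀ a, R f (φ (θ a)) a)
    (h4 : ∀ x, R F (θ (φ x)) x) :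
    numOrbits F = numOrbits f := by
  apply Nat.card_congr
  have sound1 : ∀ x y : β, R F x y →
      (⟦φ x⟧ : Quotient (Relation.EqvGen.setoid fun x y => f x = y)) = ⟦φ y⟧ := by
    intro x y h
    induction h with
    | rel x y hxy => subst hxy; exact Quotient.sound (h1 x)
    | refl => rfl
    | symm _ _ _ ih => exact ih.symm
    | trans _ _ _ _ _ ih1 ih2 => exact ih1.trans ih2
  have sound2 : ∀ a b : α, R f a b →
      (⟦θ a⟧ : Quotient (Relation.EqvGen.setoid fun x y => F x = y)) = ⟦θ b⟧ := by
    intro a b h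
    induction h with
    | rel a b hab => subst hab; exact Quotient.sound (h2 a)
    | refl => rfl
    | symm _ _ _ ih => exact ih.symm
    | trans _ _ _ _ _ ih1 ih2 => exact ih1.trans ih2
  exact
    { toFun := Quotient.lift (fun x => ⟦φ x⟧) (sound1)
      invFun := Quotient.lift (fun a => ⟦θ a⟧) (sound2)
      left_inv := by
        refine Quotient.ind ?_
        intro x
        exact Quotient.sound (h4 x)
      right_inv := by
        refine Quotient.ind ?_
        intro a
        exact Quotient.sound (h3 a) }

lemma numOrbits_conj {α β : Type*} (f : α → α) (e : α ≃ β) :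
    numOrbits (fun x => e (f (e.symm x))) = numOrbits f := by
  refine numOrbits_congr _ _ e.symm e ?_ ?_ ?_ ?_
  · intro x; simpa using R.step f (e.symm x)
  · intro a; simpa using R.step (fun x => e (f (e.symm x))) (e a)
  · intro a; simp [Relation.EqvGen.refl]
  · intro x; simp [Relation.EqvGen.refl]

/-- inserting `0` into the cycle of `v`: white in-`C` case. -/
lemma numOrbits_insertW {n : ℕ} (g : Fin n → Fin n) (v : Fin n) (F : Fin (n+1) → Fin (n+1))
    (h0 : F 0 = (g v).succ) (hv : F v.succ = 0)
    (hx : ∀ x, x ≠ v → F x.succ = (g x).succ) :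
    numOrbits F = numOrbits g := by
  refine numOrbits_congr g F (Fin.cases v id) Fin.succ ?_ ?_ ?_ ?_
  · intro x
    cases x using Fin.cases with
    | zero =>
      rw [h0]
      simpa using R.step g v
    | succ a =>
      by_cases ha : a = v
      · subst ha; rw [hv]; simp [Relation.EqvGen.refl]
      · rw [hx a ha]; simpa using R.step g a
  · intro a
    by_cases ha : a = v
    · subst ha
      refine Relation.EqvGen.trans _ 0 _ ?_ ?_
      · have := R.step F a.succ; rwa [hv] at this
      · have := R.step F 0; rwa [h0] at this
    · have := R.step F a.succ; rwa [hx a ha] at this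
  · intro a; simp [Relation.EqvGen.refl]
  · intro x
    cases x using Fin.cases with
    | zero =>
      simp only [Fin.cases_zero]
      have := R.step F v.succ; rwa [hv] at this
    | succ a => simp [Relation.EqvGen.refl]

/-- inserting `0` into the cycle of `u`: black in-`C` case. -/
lemma numOrbits_insertB {n : ℕ} (g : Fin n → Fin n) (u : Fin n) (F : Fin (n+1) → Fin (n+1))
    (h0 : F 0 = u.succ)
    (hx : ∀ x, (g x = u → F x.succ = 0) ∧ (g x ≠ u → F x.succ = (g x).succ)) :
    numOrbits F = numOrbits g := by
  refine numOrbits_congr g F (Fin.cases u id) Fin.succ ?_ ?_ ?_ ?_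
  · intro x
    cases x using Fin.cases with
    | zero => rw [h0]; simp [Relation.EqvGen.refl]
    | succ a =>
      by_cases ha : g a = u
      · rw [(hx a).1 ha]
        simp only [Fin.cases_succ, Fin.cases_zero, id]
        rw [← ha]
        exact R.step g a
      · rw [(hx a).2 ha]; simpa using R.step g a
  · intro a
    by_cases ha : g a = u
    · refine Relation.EqvGen.trans _ 0 _ ?_ ?_
      · exact Relation.EqvGen.symm _ _ (by have := R.step F a.succ; rw [(hx a).1 ha] at this; exact Relation.EqvGen.symm _ _ this)
      · have := R.step F 0; rw [h0, ← ha] at this; exact this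
    · have := R.step F a.succ; rwa [(hx a).2 ha] at this
  · intro a; simp [Relation.EqvGen.refl]
  · intro x
    cases x using Fin.cases with
    | zero =>
      simp only [Fin.cases_zero]
      exact Relation.EqvGen.symm _ _ (by have := R.step F 0; rwa [h0] at this)
    | succ a => simp [Relation.EqvGen.refl]

lemma numOrbits_fin_one (f : Fin 1 → Fin 1) : numOrbits f = 1 := by
  rw [numOrbits, Nat.card_eq_one_iff_unique]
  constructor
  · constructor
    intro a b
    obtain ⟨x⟩ := a; obtain ⟨y⟩ := b
    have : x = y := Subsingleton.elim x y
    rw [this]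
  · exact ⟨⟦0⟧⟩

@[simp] lemma extPerm_zero {n : ℕ} (f : Perm (Fin n)) : extPerm f 0 = 0 := by
  simp [extPerm, Equiv.permCongr_apply]

@[simp] lemma extPerm_succ {n : ℕ} (f : Perm (Fin n)) (x : Fin n) :
    extPerm f x.succ = (f x).succ := by
  simp [extPerm, Equiv.permCongr_apply]

@[simp] lemma extPerm_symm_zero {n : ℕ} (f : Perm (Fin n)) : (extPerm f).symm 0 = 0 := by
  rw [Equiv.symm_apply_eq, extPerm_zero]

@[simp] lemma extPerm_symm_succ {n : ℕ} (f : Perm (Fin n)) (x : Fin n) :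
    (extPerm f).symm x.succ = (f.symm x).succ := by
  rw [Equiv.symm_apply_eq, extPerm_succ, Equiv.apply_symm_apply]

/-- a permutation fixing `0` descends to `Fin n`. -/
def descend {n : ℕ} (σ : Perm (Fin (n+1))) (h0 : σ 0 = 0) : Perm (Fin n) where
  toFun x := (σ x.succ).pred (fun H => Fin.succ_ne_zero x (σ.injective (H.trans h0.symm)))
  invFun x := (σ.symm x.succ).pred (fun H => Fin.succ_ne_zero x
    (σ.symm.injective (H.trans (by rw [eq_comm, Equiv.symm_apply_eq, h0]))))
  left_inv x := by simp
  right_inv x := by simp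

lemma descend_succ {n : ℕ} (σ : Perm (Fin (n+1))) (h0 : σ 0 = 0) (x : Fin n) :
    σ x.succ = ((descend σ h0) x).succ := by
  simp [descend]

lemma iW_zero {d n : ℕ} (B : Bubble d n) (C : Finset (Fin d)) (v : Fin n) (c : Fin d) :
    insertWhite B C v c 0 = if c ∈ C then 0 else (B c v).succ := by
  unfold insertWhite
  by_cases hc : c ∈ C
  · simp [hc]
  · simp [hc, Equiv.Perm.mul_apply, Equiv.swap_apply_left]

lemma iW_succ {d n : ℕ} (B : Bubble d n) (C : Finset (Fin d)) (v : Fin n) (c : Fin d)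
    (x : Fin n) :
    insertWhite B C v c x.succ = if c ∉ C ∧ x = v then 0 else (B c x).succ := by
  unfold insertWhite
  by_cases hc : c ∈ C
  · simp [hc]
  · by_cases hx : x = v
    · subst hx
      simp [hc, Equiv.Perm.mul_apply, Equiv.swap_apply_right]
    · rw [if_neg hc, if_neg (by tauto), Equiv.Perm.mul_apply,
        Equiv.swap_apply_of_ne_of_ne (Fin.succ_ne_zero x) (by simpa [Fin.succ_inj] using hx),
        extPerm_succ]

lemma iB_zero {d n : ℕ} (B : Bubble d n) (C : Finset (Fin d)) (b : Fin n) (c : Fin d) :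
    insertBlack B C b c 0 = if c ∈ C then 0 else b.succ := by
  unfold insertBlack
  by_cases hc : c ∈ C
  · simp [hc]
  · simp [hc, Equiv.Perm.mul_apply, Equiv.swap_apply_left]

lemma iB_succ {d n : ℕ} (B : Bubble d n) (C : Finset (Fin d)) (b : Fin n) (c : Fin d)
    (x : Fin n) :
    insertBlack B C b c x.succ = if c ∉ C ∧ B c x = b then 0 else (B c x).succ := by
  unfold insertBlack
  by_cases hc : c ∈ C
  · simp [hc]
  · by_cases hx : B c x = b
    · simp [hc, hx, Equiv.Perm.mul_apply, Equiv.swap_apply_right]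
    · rw [if_neg hc, if_neg (by tauto), Equiv.Perm.mul_apply, extPerm_succ,
        Equiv.swap_apply_of_ne_of_ne (Fin.succ_ne_zero _) (by simpa [Fin.succ_inj] using hx)]

def Canon {d n : ℕ} (B : Bubble d n) (π : Perm (Fin n)) : Prop :=
  ∀ v : Fin n,
    d < 2 * (Finset.univ.filter fun c => B c v = π v).card ∨
    (2 * (Finset.univ.filter fun c => B c v = π v).card = d ∧
      ∀ (hd0 : 0 < d), (⟨0, hd0⟩ : Fin d) ∉ Finset.univ.filter fun c => B c v = π v)

lemma white_pi {d n : ℕ} (hd : 2 < d) (B : Bubble d n) (C : Finset (Fin d)) (v : Fin n)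
    (hC : AdmSet d C) (π' : Perm (Fin (n+1))) (hπ' : Canon (insertWhite B C v) π') :
    ∃ π : Perm (Fin n), Canon B π ∧ π' 0 = (π v).succ ∧ π' v.succ = 0 ∧
      ∀ x, x ≠ v → π' x.succ = (π x).succ := by
  have hu : π' v.succ = 0 := by
    have hu0 : π' (π'.symm 0) = 0 := π'.apply_symm_apply 0
    rcases Fin.eq_zero_or_eq_succ (π'.symm 0) with h | ⟨x, hx⟩
    · exfalso
      rw [h] at hu0
      have hfil : (Finset.univ.filter fun c => insertWhite B C v c 0 = π' 0) = C := by
        ext c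
        by_cases hc : c ∈ C <;> simp [iW_zero, hc, hu0, Fin.succ_ne_zero]
      rcases hπ' 0 with h1 | ⟨h1, h2⟩
      · rw [hfil] at h1
        have := hC.2.1
        omega
      · rw [hfil] at h1 h2
        obtain ⟨hd0, hmem⟩ := hC.2.2 h1
        exact h2 hd0 hmem
    · rw [hx] at hu0
      by_cases hxv : x = v
      · rwa [hxv] at hu0
      · exfalso
        have hfil : (Finset.univ.filter
            fun c => insertWhite B C v c x.succ = π' x.succ) = ∅ := by
          ext c
          simp [iW_succ, hxv, hu0, Fin.succ_ne_zero]
        rcases hπ' x.succ with h1 | ⟨h1, h2⟩ <;> rw [hfil] at h1 <;> simp at h1 <;> omega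
  have hσ0 : (π' * Equiv.swap 0 v.succ) 0 = 0 := by
    rw [Equiv.Perm.mul_apply, Equiv.swap_apply_left, hu]
  set π := descend _ hσ0 with hπdef
  have key : ∀ y, π' y = (π' * Equiv.swap 0 v.succ) (Equiv.swap 0 v.succ y) := by
    intro y; rw [Equiv.Perm.mul_apply, Equiv.swap_apply_self]
  have h1 : π' 0 = (π v).succ := by
    rw [key 0, Equiv.swap_apply_left]; exact descend_succ _ hσ0 v
  have h3 : ∀ x, x ≠ v → π' x.succ = (π x).succ := by
    intro x hx
    rw [key x.succ,
      Equiv.swap_apply_of_ne_of_ne (Fin.succ_ne_zero x) (by simpa [Fin.succ_inj] using hx)]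
    exact descend_succ _ hσ0 x
  refine ⟨π, ?_, h1, hu, h3⟩
  intro x
  by_cases hxv : x = v
  · rw [hxv]
    have hsub : (Finset.univ.filter fun c => insertWhite B C v c 0 = π' 0) ⊆
        Finset.univ.filter fun c => B c v = π v := by
      intro c hc
      rw [Finset.mem_filter] at hc ⊢
      refine ⟨Finset.mem_univ _, ?_⟩
      rw [iW_zero, h1] at hc
      by_cases hcC : c ∈ C
      · rw [if_pos hcC] at hc
        exact absurd hc.2.symm (Fin.succ_ne_zero _)
      · rw [if_neg hcC] at hc
        exact Fin.succ_injective _ hc.2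
    rcases hπ' 0 with hA | ⟨hA, hB⟩
    · left
      have := Finset.card_le_card hsub
      omega
    · by_cases hS : d < 2 * (Finset.univ.filter fun c => B c v = π v).card
      · left; exact hS
      · right
        have hle := Finset.card_le_card hsub
        have hST := Finset.eq_of_subset_of_card_le hsub (by omega)
        constructor
        · rw [← hST]; exact hA
        · intro hd0 H
          exact hB hd0 (by rw [hST]; exact H)
  · have hfe : (Finset.univ.filter fun c => B c x = π x) =
        Finset.univ.filter fun c => insertWhite B C v c x.succ = π' x.succ := by
      ext c
      rw [Finset.mem_filter, Finset.mem_filter, iW_succ, h3 x hxv]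
      simp [hxv, Fin.succ_inj]
    rw [hfe]
    exact hπ' x.succ

lemma black_pi {d n : ℕ} (hd : 2 < d) (B : Bubble d n) (C : Finset (Fin d)) (b : Fin n)
    (hC : AdmSet d C) (π' : Perm (Fin (n+1))) (hπ' : Canon (insertBlack B C b) π') :
    ∃ π : Perm (Fin n), Canon B π ∧ π' 0 = b.succ ∧
      ∀ x, π' x.succ = if π x = b then 0 else (π x).succ := by
  have h1 : π' 0 = b.succ := by
    rcases Fin.eq_zero_or_eq_succ (π' 0) with h | ⟨y, hy⟩
    · exfalso
      have hfil : (Finset.univ.filter fun c => insertBlack B C b c 0 = π' 0) = C := by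
        ext c
        by_cases hc : c ∈ C <;> simp [iB_zero, hc, h, Fin.succ_ne_zero]
      rcases hπ' 0 with h1 | ⟨h1, h2⟩
      · rw [hfil] at h1
        have := hC.2.1
        omega
      · rw [hfil] at h1 h2
        obtain ⟨hd0, hmem⟩ := hC.2.2 h1
        exact h2 hd0 hmem
    · by_cases hyb : y = b
      · rw [hy, hyb]
      · exfalso
        have hfil : (Finset.univ.filter fun c => insertBlack B C b c 0 = π' 0) = ∅ := by
          ext c
          by_cases hc : c ∈ C <;>
            simp [iB_zero, hc, hy, Fin.succ_ne_zero, Fin.succ_inj, hyb, Ne.symm hyb, eq_comm (a := (0 : Fin (n+1)))]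
        rcases hπ' 0 with h1 | ⟨h1, h2⟩ <;> rw [hfil] at h1 <;> simp at h1 <;> omega
  have hσ0 : (Equiv.swap 0 b.succ * π') 0 = 0 := by
    rw [Equiv.Perm.mul_apply, h1, Equiv.swap_apply_right]
  set π := descend _ hσ0 with hπdef
  have key : ∀ y, π' y = Equiv.swap 0 b.succ ((Equiv.swap 0 b.succ * π') y) := by
    intro y; rw [Equiv.Perm.mul_apply, Equiv.swap_apply_self]
  have h2 : ∀ x, π' x.succ = if π x = b then 0 else (π x).succ := by
    intro x
    rw [key x.succ, descend_succ _ hσ0 x]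
    show Equiv.swap 0 b.succ (π x).succ = _
    by_cases hx : π x = b
    · rw [if_pos hx, hx, Equiv.swap_apply_right]
    · rw [Equiv.swap_apply_of_ne_of_ne (Fin.succ_ne_zero _)
        (by simpa [Fin.succ_inj] using hx), if_neg hx]
  refine ⟨π, ?_, h1, h2⟩
  intro x
  by_cases hxb : π x = b
  · have hx0 : π' x.succ = 0 := by rw [h2 x, if_pos hxb]
    have hsub : (Finset.univ.filter fun c => insertBlack B C b c x.succ = π' x.succ) ⊆
        Finset.univ.filter fun c => B c x = π x := by
      intro c hc
      rw [Finset.mem_filter] at hc ⊢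
      refine ⟨Finset.mem_univ _, ?_⟩
      rw [iB_succ, hx0] at hc
      by_cases hcc : ¬c ∈ C ∧ B c x = b
      · rw [hxb]; exact hcc.2
      · rw [if_neg hcc] at hc
        exact absurd hc.2 (Fin.succ_ne_zero _)
    rcases hπ' x.succ with hA | ⟨hA, hB⟩
    · left
      have := Finset.card_le_card hsub
      omega
    · by_cases hS : d < 2 * (Finset.univ.filter fun c => B c x = π x).card
      · left; exact hS
      · right
        have hle := Finset.card_le_card hsub
        have hST := Finset.eq_of_subset_of_card_le hsub (by omega)
        constructor
        · rw [← hST]; exact hA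
        · intro hd0 H
          exact hB hd0 (by rw [hST]; exact H)
  · have hfe : (Finset.univ.filter fun c => B c x = π x) =
        Finset.univ.filter fun c => insertBlack B C b c x.succ = π' x.succ := by
      ext c
      rw [Finset.mem_filter, Finset.mem_filter, iB_succ, h2 x, if_neg hxb]
      by_cases hcc : ¬c ∈ C ∧ B c x = b
      · rw [if_pos hcc]
        simp only [Finset.mem_univ, true_and]
        constructor
        · intro hB; exact absurd (hB ▸ hcc.2) (by rw [hB] at hcc; exact fun H => hxb (H ▸ hcc.2 ▸ rfl))
        · intro h0; exact absurd h0.symm (Fin.succ_ne_zero _)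
      · rw [if_neg hcc]
        simp [Fin.succ_inj]
    rw [hfe]
    exact hπ' x.succ

lemma extPerm_comp {n : ℕ} (f g : Perm (Fin n)) (y : Fin (n+1)) :
    extPerm f (extPerm g y) = extPerm (f * g) y := by
  cases y using Fin.cases <;> simp

lemma sum_ite_card {d : ℕ} (C : Finset (Fin d)) :
    (∑ c : Fin d, if c ∈ C then 0 else 1) = d - C.card := by
  rw [Finset.sum_ite, Finset.sum_const, Finset.sum_const, smul_eq_mul, smul_eq_mul,
    mul_zero, mul_one, zero_add]
  have : Finset.univ.filter (fun c => ¬c ∈ C) = Cᶜ := by ext c; simp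
  rw [this, Finset.card_compl, Fintype.card_fin]


lemma builds_card {d n : ℕ} {B : Bubble d n} {s : Multiset (Finset (Fin d))}
    (h : Builds d n B s) : Multiset.card s + 1 = n := by
  induction h with
  | base => simp
  | stepW C v hC h ih => rw [Multiset.card_cons]; omega
  | stepB C b hC h ih => rw [Multiset.card_cons]; omega

lemma sum_card_le {d : ℕ} (s : Multiset (Finset (Fin d))) :
    (s.map fun C => C.card).sum ≤ d * Multiset.card s := by
  induction s using Multiset.induction with
  | empty => simp
  | cons C s ih =>
    rw [Multiset.map_cons, Multiset.sum_cons, Multiset.card_cons]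
    have hC : C.card ≤ d := by
      simpa using Finset.card_le_univ C
    have h2 : d * (Multiset.card s + 1) = d + d * Multiset.card s := by ring
    rw [h2]
    exact add_le_add hC ih

lemma sum_sub_eq {d : ℕ} (s : Multiset (Finset (Fin d))) :
    (s.map fun C => d - C.card).sum = d * Multiset.card s - (s.map fun C => C.card).sum := by
  induction s using Multiset.induction with
  | empty => simp
  | cons C s ih =>
    rw [Multiset.map_cons, Multiset.sum_cons, Multiset.map_cons, Multiset.sum_cons,
      Multiset.card_cons, ih]
    have hC : C.card ≤ d := by simpa using Finset.card_le_univ C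
    have hb := sum_card_le s
    have h2 : d * (Multiset.card s + 1) = d * Multiset.card s + d := by ring
    rw [h2]
    obtain ⟨K, hK⟩ : ∃ K, d * Multiset.card s = K := ⟨_, rfl⟩
    rw [hK] at hb ⊢
    omega

lemma key_count {d n : ℕ} (hd : 2 < d) {B : Bubble d n} {s : Multiset (Finset (Fin d))}
    (h : Builds d n B s) :
    ∀ π : Perm (Fin n), Canon B π →
      pairingCycles B π = d + (s.map fun C => d - C.card).sum := by
  induction h with
  | base =>
    intro π _
    rw [pairingCycles]
    simp [numOrbits_fin_one]
  | @stepW n B s C v hC hB ih =>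
    intro π' hπ'
    obtain ⟨π, hπ, h1, h2, h3⟩ := white_pi hd B C v hC π' hπ'
    have hππ' : ∀ x, π' x = extPerm π (Equiv.swap 0 v.succ x) := by
      intro x
      cases x using Fin.cases with
      | zero => rw [Equiv.swap_apply_left, extPerm_succ, h1]
      | succ a =>
        by_cases ha : a = v
        · subst ha; rw [Equiv.swap_apply_right, extPerm_zero, h2]
        · rw [Equiv.swap_apply_of_ne_of_ne (Fin.succ_ne_zero a)
            (by simpa [Fin.succ_inj] using ha), extPerm_succ, h3 a ha]
    have count : ∀ c : Fin d,
        (numOrbits fun x => (insertWhite B C v c).symm (π' x)) =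
        (numOrbits fun x => (B c).symm (π x)) + if c ∈ C then 0 else 1 := by
      intro c
      by_cases hc : c ∈ C
      · rw [if_pos hc, add_zero]
        have hiw : insertWhite B C v c = extPerm (B c) := by rw [insertWhite, if_pos hc]
        refine numOrbits_insertW (fun x => (B c).symm (π x)) v _ ?_ ?_ ?_
        · rw [hiw, Equiv.symm_apply_eq, extPerm_succ, Equiv.apply_symm_apply, h1]
        · rw [hiw, Equiv.symm_apply_eq, extPerm_zero, h2]
        · intro x hx
          rw [hiw, Equiv.symm_apply_eq, extPerm_succ, Equiv.apply_symm_apply, h3 x hx]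
      · rw [if_neg hc]
        have hiw : insertWhite B C v c = extPerm (B c) * Equiv.swap 0 v.succ := by
          rw [insertWhite, if_neg hc]
        have hF : (fun x => (insertWhite B C v c).symm (π' x)) =
            fun x => Equiv.swap 0 v.succ
              (extPerm ((B c)⁻¹ * π) ((Equiv.swap 0 v.succ).symm x)) := by
          funext x
          rw [Equiv.symm_swap, hiw, Equiv.symm_apply_eq, Equiv.Perm.mul_apply,
            Equiv.swap_apply_self, extPerm_comp, mul_inv_cancel_left, hππ']
        rw [hF, numOrbits_conj]
        refine numOrbits_ext (fun x => (B c).symm (π x)) _ (extPerm_zero _) ?_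
        intro x
        rw [extPerm_succ]
        rfl
    rw [pairingCycles, Finset.sum_congr rfl (fun c _ => count c), Finset.sum_add_distrib,
      sum_ite_card, Multiset.map_cons, Multiset.sum_cons]
    have hIH := ih π hπ
    rw [pairingCycles] at hIH
    rw [hIH]
    omega
  | @stepB n B s C b hC hB ih =>
    intro π' hπ'
    obtain ⟨π, hπ, h1, h2⟩ := black_pi hd B C b hC π' hπ'
    have hππ' : ∀ x, π' x = Equiv.swap 0 b.succ (extPerm π x) := by
      intro x
      cases x using Fin.cases with
      | zero => rw [extPerm_zero, Equiv.swap_apply_left, h1]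
      | succ a =>
        rw [extPerm_succ, h2 a]
        by_cases ha : π a = b
        · rw [if_pos ha, ha, Equiv.swap_apply_right]
        · rw [if_neg ha, Equiv.swap_apply_of_ne_of_ne (Fin.succ_ne_zero _)
            (by simpa [Fin.succ_inj] using ha)]
    have count : ∀ c : Fin d,
        (numOrbits fun x => (insertBlack B C b c).symm (π' x)) =
        (numOrbits fun x => (B c).symm (π x)) + if c ∈ C then 0 else 1 := by
      intro c
      by_cases hc : c ∈ C
      · rw [if_pos hc, add_zero]
        have hib : insertBlack B C b c = extPerm (B c) := by rw [insertBlack, if_pos hc]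
        refine numOrbits_insertB (fun x => (B c).symm (π x)) ((B c).symm b) _ ?_ ?_
        · rw [hib, Equiv.symm_apply_eq, extPerm_succ, Equiv.apply_symm_apply, h1]
        · intro x
          constructor
          · intro hgx
            have hxb : π x = b := by
              have := congrArg (B c) hgx
              rwa [Equiv.apply_symm_apply, Equiv.apply_symm_apply] at this
            rw [hib, Equiv.symm_apply_eq, extPerm_zero, h2, if_pos hxb]
          · intro hgx
            have hxb : π x ≠ b := fun H => hgx (by show (B c).symm (π x) = _; rw [H])
            rw [hib, Equiv.symm_apply_eq, extPerm_succ, Equiv.apply_symm_apply, h2,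
              if_neg hxb]
      · rw [if_neg hc]
        have hib : insertBlack B C b c = Equiv.swap 0 b.succ * extPerm (B c) := by
          rw [insertBlack, if_neg hc]
        have hF : (fun x => (insertBlack B C b c).symm (π' x)) =
            fun x => extPerm ((B c)⁻¹ * π) x := by
          funext x
          rw [hib, Equiv.symm_apply_eq, Equiv.Perm.mul_apply, extPerm_comp,
            mul_inv_cancel_left, hππ']
        rw [hF]
        refine numOrbits_ext (fun x => (B c).symm (π x)) _ (extPerm_zero _) ?_
        intro x
        rw [extPerm_succ]
        rfl
    rw [pairingCycles, Finset.sum_congr rfl (fun c _ => count c), Finset.sum_add_distrib,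
      sum_ite_card, Multiset.map_cons, Multiset.sum_cons]
    have hIH := ih π hπ
    rw [pairingCycles] at hIH
    rw [hIH]
    omega


/-- for the graph `G_B` obtained by joining every canonical pair of a GM
bubble `B` by a color-0 edge, the total number of bicolored `{0,c}`-cycles is
`d + Σ_C (d - |C|) b_C = dV/2 - Σ_C |C| b_C` (here `V = 2n`). -/
theorem canonical_pairing_cycles {d n : ℕ} (hd : 2 < d) {B : Bubble d n}
    {s : Multiset (Finset (Fin d))} (h : Builds d n B s) (π : Equiv.Perm (Fin n))
    (hπ : ∀ v : Fin n,
      d < 2 * (Finset.univ.filter fun c => B c v = π v).card ∨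
      (2 * (Finset.univ.filter fun c => B c v = π v).card = d ∧
        ∀ (hd0 : 0 < d), (⟨0, hd0⟩ : Fin d) ∉ Finset.univ.filter fun c => B c v = π v)) :
    pairingCycles B π = d + (s.map fun C => d - C.card).sum ∧
      pairingCycles B π = d * n - (s.map fun C => C.card).sum := by
  have key := key_count hd h π hπ
  refine ⟨key, ?_⟩
  have hcard := builds_card h
  have hb := sum_card_le s
  rw [key, sum_sub_eq]
  have hdn : d * n = d * Multiset.card s + d := by
    rw [← hcard]; ring
  rw [hdn]
  obtain ⟨K, hK⟩ : ∃ K, d * Multiset.card s = K := ⟨_, rfl⟩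
  rw [hK] at hb ⊢
  omega
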